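/- Every infinite commutative ring R with identity is 2-rigid: every R-linear map from R² to R has infinite kernel. -/

import Mathlib

/-- Every infinite commutative ring `R` with identity is `2`-rigid:
every `R`-linear map `R² → R` has infinite kernel. -/
theorem infinite_commRing_two_rigid (R : Type*) [CommRing R] [Infinite R]
    (f : (Fin 2 → R) →ₗ[R] R) :
    (LinearMap.ker f : Set (Fin 2 → R)).Infinite := by
  set a := f (Pi.single 0 1) with ha
  set b := f (Pi.single 1 1) with hb
  have hf : ∀ x : Fin 2 → R, f x = x 0 * a + x 1 * b := by
    intro x
    have hx : x = x 0 • (Pi.single 0 1 : Fin 2 → R) + x 1 • (Pi.single 1 1 : Fin 2 → R) := by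
      funext i; fin_cases i <;> simp
    conv_lhs => rw [hx]
    rw [map_add, map_smul, map_smul, smul_eq_mul, smul_eq_mul]
  set S : Set R := {t : R | a * t = 0 ∧ b * t = 0} with hS
  by_cases hSi : S.Infinite
  · have : Infinite S := hSi.to_subtype
    apply Set.infinite_of_injective_forall_mem
      (f := fun t : S => (![(t : R), 0] : Fin 2 → R))
    · intro s t hst
      have := congrFun hst 0
      simpa [Subtype.ext_iff] using this
    · intro t
      simp only [SetLike.mem_coe, LinearMap.mem_ker, hf]
      have h1 := t.2.1
      have h2 := t.2.2
      have e1 : (↑t : R) * a = 0 := by rw [mul_comm]; exact h1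
      simp [e1]
  · -- S finite
    rw [Set.not_infinite] at hSi
    set h : R →ₗ[R] (Fin 2 → R) :=
      { toFun := fun t => ![b * t, -(a * t)]
        map_add' := by intro x y; funext i; fin_cases i <;> simp <;> ring
        map_smul' := by intro c x; funext i; fin_cases i <;> simp <;> ring } with hh
    have hker : (LinearMap.ker h : Set R) = S := by
      ext t
      simp only [SetLike.mem_coe, LinearMap.mem_ker, hS, Set.mem_setOf_eq, hh]
      constructor
      · intro ht
        have h0 := congrFun ht 0
        have h1 := congrFun ht 1
        simp at h0 h1
        exact ⟨h1, h0⟩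
      · rintro ⟨h1, h0⟩
        funext i; fin_cases i <;> simp [h0, h1]
    have hrange : (Set.range h : Set (Fin 2 → R)) ⊆ (LinearMap.ker f : Set (Fin 2 → R)) := by
      rintro _ ⟨t, rfl⟩
      simp only [SetLike.mem_coe, LinearMap.mem_ker, hf, hh]
      simp; ring
    intro hfin
    have hrf : (Set.range h).Finite := hfin.subset hrange
    have hkf : Finite (LinearMap.ker h) := by
      rw [← hker] at hSi
      exact hSi.to_subtype
    have hrgf : Finite (LinearMap.range h) := by
      have : ((LinearMap.range h : Submodule R (Fin 2 → R)) : Set (Fin 2 → R)) = Set.range h := by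
        ext x; simp [LinearMap.mem_range]
      exact Set.Finite.to_subtype (this ▸ hrf)
    have hq : Finite (R ⧸ LinearMap.ker h) :=
      Finite.of_equiv _ (h.quotKerEquivRange).symm.toEquiv
    haveI : Finite R := by
      have hkf' : Finite (LinearMap.ker h).toAddSubgroup := hkf
      have hq' : Finite (R ⧸ (LinearMap.ker h).toAddSubgroup) := hq
      exact Finite.of_addSubgroup_quotient (H := (LinearMap.ker h).toAddSubgroup)
    exact not_finite R
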